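/- Let t0 ∈ (0,1)^m. Assume: (i) there is an open neighborhood N(t0) ⊆ (0,1)^m of t0 such that for every t ∈ N(t0) the φ-projection of t on M = S(cl(Θ)) exists, is unique, and equals S(θ) for a (necessarily unique) θ ∈ int(Θ), so that ϑ* maps N(t0) into int(Θ); and (ii) the k×k Hessian matrix H0 of the function θ ↦ D_φ(S(θ)∣t0) evaluated at ϑ*(t0) is positive definite. Then the map S* = S ∘ ϑ* is continuously differentiable on an open neighborhood of t0, and its m×m Jacobian matrix at t0 is J[S*](t0) = J[S](ϑ*(t0)) · J[ϑ*](t0), where J[ϑ*](t0) = H0⁻¹ · J[S](ϑ*(t0))ᵀ · Δ(t0) and Δ(t0) is the m×m diagonal matrix whose i-th diagonal entry is (S_i(ϑ*(t0))/t_{0,i}²)·φ''(S_i(ϑ*(t0))/t_{0,i}). -/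

import Mathlib

open Filter Topology Matrix

/-- For `t ∈ (0,1)^m` and `s ∈ [0,1]^m`, the (real-valued) `φ`-divergence
`D_φ(s∣t) = Σ_{i=1}^m t_i φ(s_i/t_i)`. -/
noncomputable def DphiR (φ : ℝ → ℝ) {m : ℕ} (s t : Fin m → ℝ) : ℝ :=
  ∑ i, t i * φ (s i / t i)

/-- `p` is a `φ`-projection of `t` on `M`: `p ∈ M` minimizes `D_φ(·∣t)` over `M`. -/
def IsPhiProjR (φ : ℝ → ℝ) {m : ℕ} (M : Set (Fin m → ℝ)) (t p : Fin m → ℝ) : Prop :=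
  p ∈ M ∧ ∀ s ∈ M, DphiR φ p t ≤ DphiR φ s t

/-- The Jacobian matrix of `F : ℝ^a → ℝ^b` at `x`. -/
noncomputable def jacMatrix {a b : ℕ} (F : (Fin a → ℝ) → (Fin b → ℝ))
    (x : Fin a → ℝ) : Matrix (Fin b) (Fin a) ℝ :=
  Matrix.of fun i j => fderiv ℝ (fun y => F y i) x (Pi.single j 1)

/-- The Hessian matrix of `h : ℝ^a → ℝ` at `x`. -/
noncomputable def hessMatrix {a : ℕ} (h : (Fin a → ℝ) → ℝ)
    (x : Fin a → ℝ) : Matrix (Fin a) (Fin a) ℝ :=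
  Matrix.of fun i j =>
    fderiv ℝ (fun y => fderiv ℝ h y (Pi.single j 1)) x (Pi.single i 1)

open Set

variable {m k : ℕ} {φ : ℝ → ℝ} {S : (Fin k → ℝ) → (Fin m → ℝ)} {Θ : Set (Fin k → ℝ)}

/-- gradient vector of θ ↦ D_φ(S θ | t). -/
noncomputable def gradD (φ : ℝ → ℝ) (S : (Fin k → ℝ) → (Fin m → ℝ))
    (t : Fin m → ℝ) (θ : Fin k → ℝ) : Fin k → ℝ :=
  fun j => ∑ i, deriv φ (S θ i / t i) * fderiv ℝ (fun y => S y i) θ (Pi.single j 1)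

lemma lem_hasFDerivAt_D (hφC2 : ContDiffOn ℝ 2 φ (Set.Ioi 0))
    (hSC2 : ContDiffOn ℝ 2 S (interior Θ))
    (hSpos : ∀ θ ∈ interior Θ, ∀ i, 0 < S θ i)
    {t : Fin m → ℝ} (ht : ∀ i, 0 < t i) {θ : Fin k → ℝ} (hθ : θ ∈ interior Θ) :
    HasFDerivAt (fun θ' => DphiR φ (S θ') t)
      (∑ i, deriv φ (S θ i / t i) • fderiv ℝ (fun y => S y i) θ) θ := by
  unfold DphiR
  apply HasFDerivAt.fun_sum
  intro i _
  have hSi : ContDiffOn ℝ 2 (fun y => S y i) (interior Θ) :=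
    ((ContinuousLinearMap.proj i : (Fin m → ℝ) →L[ℝ] ℝ).contDiff.comp_contDiffOn hSC2)
  have hSdiff : DifferentiableAt ℝ (fun y => S y i) θ :=
    ((hSi.contDiffAt (isOpen_interior.mem_nhds hθ)).differentiableAt (by norm_num))
  have hSder : HasFDerivAt (fun y => S y i) (fderiv ℝ (fun y => S y i) θ) θ :=
    hSdiff.hasFDerivAt
  have hx : (0:ℝ) < S θ i / t i := div_pos (hSpos θ hθ i) (ht i)
  have hφd : HasDerivAt φ (deriv φ (S θ i / t i)) (S θ i / t i) :=
    (((hφC2.contDiffAt (isOpen_Ioi.mem_nhds hx)).differentiableAt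
      (by norm_num)).hasDerivAt)
  have hinner : HasFDerivAt (fun y => S y i / t i)
      ((t i)⁻¹ • fderiv ℝ (fun y => S y i) θ) θ := by
    simpa [div_eq_inv_mul, smul_smul] using hSder.const_mul (t i)⁻¹
  have hcomp := hφd.comp_hasFDerivAt θ hinner
  have := hcomp.const_mul (t i)
  convert this using 1
  · rfl
  · rfl
  ext v
  rw [smul_smul, smul_smul]
  congr 1
  rw [mul_comm (t i), mul_assoc, mul_inv_cancel₀ (ht i).ne', mul_one]

lemma lem_stationary (hφC2 : ContDiffOn ℝ 2 φ (Set.Ioi 0))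
    (hSC2 : ContDiffOn ℝ 2 S (interior Θ))
    (hSpos : ∀ θ ∈ interior Θ, ∀ i, 0 < S θ i)
    {t : Fin m → ℝ} (ht : ∀ i, 0 < t i) {ϑt : Fin k → ℝ} (hϑint : ϑt ∈ interior Θ)
    (hmin : ∀ θ' ∈ closure Θ, DphiR φ (S ϑt) t ≤ DphiR φ (S θ') t) :
    gradD φ S t ϑt = 0 := by
  have hloc : IsLocalMin (fun θ' => DphiR φ (S θ') t) ϑt :=
    Filter.eventually_of_mem (isOpen_interior.mem_nhds hϑint)
      (fun θ' hθ' => hmin θ' (subset_closure (interior_subset hθ')))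
  have h0 := hloc.fderiv_eq_zero
  have hd := (lem_hasFDerivAt_D hφC2 hSC2 hSpos ht hϑint).fderiv
  rw [h0] at hd
  funext j
  have := congrArg (fun L : (Fin k → ℝ) →L[ℝ] ℝ => L (Pi.single j 1)) hd
  simpa [gradD] using this.symm

lemma lem_gradD_C1 (hφC2 : ContDiffOn ℝ 2 φ (Set.Ioi 0))
    (hSC2 : ContDiffOn ℝ 2 S (interior Θ))
    (hSpos : ∀ θ ∈ interior Θ, ∀ i, 0 < S θ i)
    {N : Set (Fin m → ℝ)} (hNpos : ∀ t ∈ N, ∀ i, 0 < t i) :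
    ContDiffOn ℝ 1 (fun p : (Fin m → ℝ) × (Fin k → ℝ) => gradD φ S p.1 p.2)
      (N ×ˢ interior Θ) := by
  rw [contDiffOn_pi]
  intro j
  apply ContDiffOn.sum
  intro i _
  have hSi : ContDiffOn ℝ 2 (fun y => S y i) (interior Θ) :=
    ((ContinuousLinearMap.proj i : (Fin m → ℝ) →L[ℝ] ℝ).contDiff.comp_contDiffOn hSC2)
  apply ContDiffOn.mul
  · have hq : ContDiffOn ℝ 1 (fun p : (Fin m → ℝ) × (Fin k → ℝ) => S p.2 i / p.1 i)
        (N ×ˢ interior Θ) := by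
      apply ContDiffOn.div
      · exact (hSi.of_le one_le_two).comp contDiff_snd.contDiffOn (fun p hp => hp.2)
      · exact ((contDiff_apply ℝ ℝ i).comp contDiff_fst).contDiffOn
      · exact fun p hp => (hNpos _ hp.1 i).ne'
    have hφ' : ContDiffOn ℝ 1 (deriv φ) (Set.Ioi 0) :=
      hφC2.deriv_of_isOpen isOpen_Ioi (by norm_num)
    exact hφ'.comp hq (fun p hp => div_pos (hSpos _ hp.2 i) (hNpos _ hp.1 i))
  · have h1 : ContDiffOn ℝ 1 (fderiv ℝ (fun y => S y i)) (interior Θ) :=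
      hSi.fderiv_of_isOpen isOpen_interior (by norm_num)
    have h2 : ContDiffOn ℝ 1 (fun θ => (fderiv ℝ (fun y => S y i) θ) (Pi.single j 1))
        (interior Θ) := h1.clm_apply contDiffOn_const
    exact h2.comp contDiff_snd.contDiffOn (fun p hp => hp.2)

lemma lem_phi_contOn (hφconv : ConvexOn ℝ (Set.Ici 0) φ)
    (hφ0 : ContinuousWithinAt φ (Set.Ici 0) 0) :
    ContinuousOn φ (Set.Ici 0) := by
  intro x hx
  rcases eq_or_lt_of_le (Set.mem_Ici.mp hx : (0:ℝ) ≤ x) with h | h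
  · rwa [← h]
  · have h1 : ConvexOn ℝ (Set.Ioi (0:ℝ)) φ := hφconv.subset Set.Ioi_subset_Ici_self (convex_Ioi 0)
    exact ((h1.continuousOn isOpen_Ioi).continuousAt (isOpen_Ioi.mem_nhds h)).continuousWithinAt

lemma lem_theta_tendsto (hφconv : ConvexOn ℝ (Set.Ici 0) φ)
    (hφ0 : ContinuousWithinAt φ (Set.Ici 0) 0)
    (hΘbd : Bornology.IsBounded Θ)
    (hScont : ContinuousOn S (closure Θ))
    {t0 : Fin m → ℝ}
    {N : Set (Fin m → ℝ)} (hNopen : IsOpen N) (ht0N : t0 ∈ N)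
    (hNsub : ∀ t ∈ N, ∀ i, 0 < t i)
    (hSrange : ∀ θ ∈ closure Θ, ∀ i, 0 ≤ S θ i)
    {ϑ : (Fin m → ℝ) → (Fin k → ℝ)}
    (hϑcl : ∀ t ∈ N, ϑ t ∈ closure Θ)
    (hmin : ∀ t ∈ N, ∀ θ' ∈ closure Θ, DphiR φ (S (ϑ t)) t ≤ DphiR φ (S θ') t)
    (huniq : ∀ θ' ∈ closure Θ, DphiR φ (S θ') t0 ≤ DphiR φ (S (ϑ t0)) t0 → θ' = ϑ t0) :
    Tendsto ϑ (𝓝 t0) (𝓝 (ϑ t0)) := by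
  have hθ0cl : ϑ t0 ∈ closure Θ := hϑcl t0 ht0N
  have hcomp : IsCompact (closure Θ) :=
    Metric.isCompact_of_isClosed_isBounded isClosed_closure hΘbd.closure
  have hφcont : ContinuousOn φ (Set.Ici 0) := lem_phi_contOn hφconv hφ0
  have : CompactSpace (closure Θ) := isCompact_iff_compactSpace.mp hcomp
  set C := closure Θ with hC
  set F' : (Fin m → ℝ) × C → ℝ := fun p => DphiR φ (S p.2) p.1 with hF'
  set U : Set ((Fin m → ℝ) × C) := {p | ∀ i, 0 < p.1 i} with hU
  have hUopen : IsOpen U := by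
    have : IsOpen {t : Fin m → ℝ | ∀ i, 0 < t i} := by
      have : {t : Fin m → ℝ | ∀ i, 0 < t i} = ⋂ i, {t | 0 < t i} := by
        ext t; simp
      rw [this]
      exact isOpen_iInter_of_finite fun i =>
        isOpen_lt continuous_const (continuous_apply i)
    exact this.preimage continuous_fst
  have hSsub : Continuous (fun y : C => S y) := hScont.restrict
  have hFcont : ContinuousOn F' U := by
    apply continuousOn_finset_sum
    intro i _
    apply ContinuousOn.mul
    · exact ((continuous_apply i).comp continuous_fst).continuousOn
    · apply hφcont.comp
      · apply ContinuousOn.div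
        · exact (((continuous_apply i).comp hSsub).comp continuous_snd).continuousOn
        · exact ((continuous_apply i).comp continuous_fst).continuousOn
        · exact fun p hp => (hp i).ne'
      · exact fun p hp => div_nonneg (hSrange p.2 p.2.2 i) (hp i).le
  have ht0U : ∀ y : C, ((t0, y) : _ × C) ∈ U := fun y i => hNsub t0 ht0N i
  rw [tendsto_nhds]
  intro V hVopen hV0
  set K' : Set C := {y : C | (y : Fin k → ℝ) ∉ V} with hK'
  have hK'comp : IsCompact K' := by
    have : IsClosed K' := (hVopen.preimage continuous_subtype_val).isClosed_compl
    exact this.isCompact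
  have hmemN : ∀ᶠ t in 𝓝 t0, t ∈ N := hNopen.mem_nhds ht0N
  by_cases hne : K'.Nonempty
  · set θ0s : C := ⟨ϑ t0, hθ0cl⟩ with hθ0s
    have hcont0 : ∀ y : C, ContinuousAt F' (t0, y) := fun y =>
      hFcont.continuousAt (hUopen.mem_nhds (ht0U y))
    obtain ⟨y0, hy0K, hy0min'⟩ :=
      hK'comp.exists_isMinOn hne
        (fun y hy => ((hcont0 y).comp
          ((continuous_const.prodMk continuous_id).continuousAt)).continuousWithinAt)
    have hy0min : ∀ y ∈ K', F' (t0, y0) ≤ F' (t0, y) := fun y hy => hy0min' hy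
    set d := F' (t0, θ0s) with hd
    set c := F' (t0, y0) with hcdef
    have hdc : d < c := by
      rcases lt_or_ge d c with h | h
      · exact h
      · exfalso
        have := huniq y0 y0.2 h
        apply hy0K
        rw [show (y0 : Fin k → ℝ) = ϑ t0 from this]
        exact hV0
    set a := (d + c) / 2 with ha
    have had : d < a := by simp [ha]; linarith
    have hac : a < c := by simp [ha]; linarith
    have E1 : ∀ᶠ t in 𝓝 t0, F' (t, θ0s) < a := by
      have hi : ContinuousAt (fun t : Fin m → ℝ => ((t, θ0s) : (Fin m → ℝ) × C)) t0 :=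
        (continuous_id.prodMk continuous_const).continuousAt
      have hcont : ContinuousAt (fun t => F' (t, θ0s)) t0 := (hcont0 θ0s).tendsto.comp hi
      exact hcont (Iio_mem_nhds had)
    have E2 : ∀ᶠ t in 𝓝 t0, ∀ y ∈ K', a < F' (t, y) := by
      apply hK'comp.eventually_forall_of_forall_eventually
      intro y hy
      have hgt : a < F' (t0, y) := lt_of_lt_of_le hac (hy0min y hy)
      exact hcont0 y (Ioi_mem_nhds hgt)
    filter_upwards [E1, E2, hmemN] with t h1 h2 h3
    by_contra hnV
    have hyK : (⟨ϑ t, hϑcl t h3⟩ : C) ∈ K' := hnV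
    have hle : F' (t, ⟨ϑ t, hϑcl t h3⟩) ≤ F' (t, θ0s) := hmin t h3 (ϑ t0) hθ0cl
    have hgt := h2 _ hyK
    linarith
  · filter_upwards [hmemN] with t h3
    by_contra hnV
    exact hne ⟨⟨ϑ t, hϑcl t h3⟩, hnV⟩

lemma lem_gradD_t_hasFDerivAt (hφC2 : ContDiffOn ℝ 2 φ (Set.Ioi 0))
    {θ0 : Fin k → ℝ} (hSpos : ∀ i, 0 < S θ0 i)
    {t0 : Fin m → ℝ} (ht0 : ∀ i, 0 < t0 i) (j : Fin k) :
    HasFDerivAt (fun t => gradD φ S t θ0 j)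
      (∑ l, (fderiv ℝ (fun y => S y l) θ0 (Pi.single j 1)) •
        (deriv (deriv φ) (S θ0 l / t0 l) •
          ((S θ0 l * -(t0 l ^ 2)⁻¹) • (ContinuousLinearMap.proj l :
            (Fin m → ℝ) →L[ℝ] ℝ)))) t0 := by
  unfold gradD
  apply HasFDerivAt.fun_sum
  intro l _
  have hproj : HasFDerivAt (fun t : Fin m → ℝ => t l)
      (ContinuousLinearMap.proj l : (Fin m → ℝ) →L[ℝ] ℝ) t0 :=
    hasFDerivAt_apply l t0
  have h1 : HasDerivAt (fun x : ℝ => S θ0 l / x) (S θ0 l * -(t0 l ^ 2)⁻¹) (t0 l) := by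
    simpa [div_eq_mul_inv] using (hasDerivAt_inv (ht0 l).ne').const_mul (S θ0 l)
  have h2 : HasFDerivAt (fun t : Fin m → ℝ => S θ0 l / t l)
      ((S θ0 l * -(t0 l ^ 2)⁻¹) • (ContinuousLinearMap.proj l :
        (Fin m → ℝ) →L[ℝ] ℝ)) t0 := h1.comp_hasFDerivAt t0 hproj
  have hx : (0:ℝ) < S θ0 l / t0 l := div_pos (hSpos l) (ht0 l)
  have hφ'C1 : ContDiffOn ℝ 1 (deriv φ) (Set.Ioi 0) :=
    hφC2.deriv_of_isOpen isOpen_Ioi (by norm_num)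
  have hφ'' : HasDerivAt (deriv φ) (deriv (deriv φ) (S θ0 l / t0 l)) (S θ0 l / t0 l) :=
    ((hφ'C1.contDiffAt (isOpen_Ioi.mem_nhds hx)).differentiableAt (by norm_num)).hasDerivAt
  have h3 := hφ''.comp_hasFDerivAt t0 h2
  have h4 := h3.mul_const (fderiv ℝ (fun y => S y l) θ0 (Pi.single j 1))
  exact h4

lemma clm_pi_expand {n : ℕ} {F : Type*} [NormedAddCommGroup F] [NormedSpace ℝ F]
    (ℓ : (Fin n → ℝ) →L[ℝ] F) (v : Fin n → ℝ) :
    ℓ v = ∑ l, v l • ℓ (Pi.single l 1) := by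
  conv_lhs => rw [show v = ∑ l, Pi.single l (v l) from (Finset.univ_sum_single v).symm]
  rw [map_sum]
  refine Finset.sum_congr rfl fun l _ => ?_
  have h : Pi.single l (v l) = v l • (Pi.single l (1:ℝ) : Fin n → ℝ) := by
    rw [← Pi.single_smul]; simp
  rw [h, _root_.map_smul]

set_option maxHeartbeats 1000000 in
/-- under the assumptions of Statement 11, the projection map
`S* = S ∘ ϑ*` is continuously differentiable near `t0`, with Jacobian
`J[S*](t0) = J[S](ϑ*(t0)) · J[ϑ*](t0)` where
`J[ϑ*](t0) = H0⁻¹ · J[S](ϑ*(t0))ᵀ · Δ(t0)`. -/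
theorem statement12 (m k : ℕ) (hm : 1 ≤ m) (hk : 1 ≤ k) (hkm : k ≤ m)
    (φ : ℝ → ℝ)
    (hφconv : ConvexOn ℝ (Set.Ici 0) φ)
    (hφ0 : ContinuousWithinAt φ (Set.Ici 0) 0)
    (hφsc : StrictConvexOn ℝ (Set.Ici (0 : ℝ)) φ)
    (hφC2 : ContDiffOn ℝ 2 φ (Set.Ioi (0 : ℝ)))
    (Θ : Set (Fin k → ℝ)) (hΘbd : Bornology.IsBounded Θ)
    (hΘint : (interior Θ).Nonempty)
    (S : (Fin k → ℝ) → (Fin m → ℝ))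
    (hScont : ContinuousOn S (closure Θ))
    (hSinj : Set.InjOn S (closure Θ))
    (hSC2 : ContDiffOn ℝ 2 S (interior Θ))
    (hSrange : ∀ θ ∈ closure Θ, ∀ i, S θ i ∈ Set.Icc (0 : ℝ) 1)
    (hSint : ∀ θ ∈ interior Θ, ∀ i, S θ i ∈ Set.Ioo (0 : ℝ) 1)
    (t0 : Fin m → ℝ) (ht0 : ∀ i, t0 i ∈ Set.Ioo (0 : ℝ) 1)
    (N : Set (Fin m → ℝ)) (hNopen : IsOpen N) (ht0N : t0 ∈ N)
    (hNsub : ∀ t ∈ N, ∀ i, t i ∈ Set.Ioo (0 : ℝ) 1)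
    (ϑ : (Fin m → ℝ) → (Fin k → ℝ))
    (hϑ : ∀ t ∈ N, ϑ t ∈ interior Θ ∧
      ∀ s, IsPhiProjR φ (S '' closure Θ) t s ↔ s = S (ϑ t))
    (hH0 : (hessMatrix (fun θ => DphiR φ (S θ) t0) (ϑ t0)).PosDef) :
    ∃ U : Set (Fin m → ℝ), IsOpen U ∧ t0 ∈ U ∧ U ⊆ N ∧
      ContDiffOn ℝ 1 (fun t => S (ϑ t)) U ∧
      jacMatrix (fun t => S (ϑ t)) t0 =
        jacMatrix S (ϑ t0) *
          ((hessMatrix (fun θ => DphiR φ (S θ) t0) (ϑ t0))⁻¹ *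
            (jacMatrix S (ϑ t0))ᵀ *
            Matrix.diagonal
              (fun i => S (ϑ t0) i / (t0 i) ^ 2 *
                deriv (deriv φ) (S (ϑ t0) i / t0 i))) := by
  classical
  set θ0 := ϑ t0 with hθ0def
  have hθ0int : θ0 ∈ interior Θ := (hϑ t0 ht0N).1
  have hSpos : ∀ θ ∈ interior Θ, ∀ i, 0 < S θ i := fun θ hθ i => (hSint θ hθ i).1
  have hNpos : ∀ t ∈ N, ∀ i, 0 < t i := fun t ht i => (hNsub t ht i).1
  have ht0pos : ∀ i, 0 < t0 i := hNpos t0 ht0N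
  have hϑint : ∀ t ∈ N, ϑ t ∈ interior Θ := fun t ht => (hϑ t ht).1
  have hϑcl : ∀ t ∈ N, ϑ t ∈ closure Θ := fun t ht =>
    subset_closure (interior_subset (hϑint t ht))
  have hproj : ∀ t ∈ N, IsPhiProjR φ (S '' closure Θ) t (S (ϑ t)) :=
    fun t ht => ((hϑ t ht).2 _).mpr rfl
  have hmin : ∀ t ∈ N, ∀ θ' ∈ closure Θ, DphiR φ (S (ϑ t)) t ≤ DphiR φ (S θ') t :=
    fun t ht θ' hθ' => (hproj t ht).2 _ ⟨θ', hθ', rfl⟩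
  have hstat : ∀ t ∈ N, gradD φ S t (ϑ t) = 0 := fun t ht =>
    lem_stationary hφC2 hSC2 hSpos (hNpos t ht) (hϑint t ht)
      (fun θ' hθ' => hmin t ht θ' hθ')
  have huniq : ∀ θ' ∈ closure Θ, DphiR φ (S θ') t0 ≤ DphiR φ (S (ϑ t0)) t0 → θ' = ϑ t0 := by
    intro θ' hθ' hle
    have hproj' : IsPhiProjR φ (S '' closure Θ) t0 (S θ') :=
      ⟨⟨θ', hθ', rfl⟩, fun s hs => le_trans hle ((hproj t0 ht0N).2 s hs)⟩
    exact hSinj hθ' (hϑcl t0 ht0N) (((hϑ t0 ht0N).2 (S θ')).mp hproj')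
  have htend : Tendsto ϑ (𝓝 t0) (𝓝 θ0) :=
    lem_theta_tendsto hφconv hφ0 hΘbd hScont hNopen ht0N hNpos
      (fun θ hθ i => (hSrange θ hθ i).1) hϑcl hmin huniq
  -- the C1 map G and its derivative at p0
  have hNNopen : IsOpen (N ×ˢ interior Θ) := hNopen.prod isOpen_interior
  have hp0 : ((t0, θ0) : (Fin m → ℝ) × (Fin k → ℝ)) ∈ N ×ˢ interior Θ := ⟨ht0N, hθ0int⟩
  have hGC1 : ContDiffOn ℝ 1 (fun p : (Fin m → ℝ) × (Fin k → ℝ) => gradD φ S p.1 p.2)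
      (N ×ˢ interior Θ) := lem_gradD_C1 hφC2 hSC2 hSpos hNpos
  have hGc1at : ContDiffAt ℝ 1 (fun p : (Fin m → ℝ) × (Fin k → ℝ) => gradD φ S p.1 p.2)
      (t0, θ0) := hGC1.contDiffAt (hNNopen.mem_nhds hp0)
  set DG := fderiv ℝ (fun p : (Fin m → ℝ) × (Fin k → ℝ) => gradD φ S p.1 p.2) (t0, θ0)
    with hDGdef
  have hDG : HasFDerivAt (fun p : (Fin m → ℝ) × (Fin k → ℝ) => gradD φ S p.1 p.2) DG
      (t0, θ0) := (hGc1at.differentiableAt one_ne_zero).hasFDerivAt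
  set H0 := hessMatrix (fun θ => DphiR φ (S θ) t0) θ0 with hH0def
  -- Hessian entries = θ-partials of gradD
  have hHentry : ∀ i j, H0 i j = fderiv ℝ (fun θ => gradD φ S t0 θ j) θ0 (Pi.single i 1) := by
    intro i j
    have heq : (fun θ => fderiv ℝ (fun θ' => DphiR φ (S θ') t0) θ (Pi.single j 1))
        =ᶠ[𝓝 θ0] (fun θ => gradD φ S t0 θ j) := by
      filter_upwards [isOpen_interior.mem_nhds hθ0int] with θ hθ
      rw [(lem_hasFDerivAt_D hφC2 hSC2 hSpos ht0pos hθ).fderiv]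
      simp [gradD]
    show fderiv ℝ (fun θ => fderiv ℝ (fun θ' => DphiR φ (S θ') t0) θ (Pi.single j 1)) θ0
        (Pi.single i 1) = _
    rw [heq.fderiv_eq]
  -- θ-direction of DG gives Hessian entries
  have hθval : ∀ i j, fderiv ℝ (fun θ => gradD φ S t0 θ j) θ0 (Pi.single i 1)
      = DG ((0 : Fin m → ℝ), Pi.single i 1) j := by
    intro i j
    have h1 : HasFDerivAt (fun θ : Fin k → ℝ => ((t0, θ) : (Fin m → ℝ) × (Fin k → ℝ)))
        (((0 : (Fin k → ℝ) →L[ℝ] (Fin m → ℝ))).prod (ContinuousLinearMap.id ℝ _)) θ0 :=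
      (hasFDerivAt_const t0 θ0).prodMk (hasFDerivAt_id θ0)
    have h2 : HasFDerivAt (fun p : (Fin m → ℝ) × (Fin k → ℝ) => gradD φ S p.1 p.2 j)
        ((ContinuousLinearMap.proj j).comp DG) (t0, θ0) :=
      by have := (hasFDerivAt_apply (𝕜 := ℝ) (F' := fun _ : Fin k => ℝ) j (gradD φ S t0 θ0)).comp (t0, θ0) hDG; exact this
    have h3 := h2.comp θ0 h1
    rw [show (fun θ => gradD φ S t0 θ j)
        = ((fun p : (Fin m → ℝ) × (Fin k → ℝ) => gradD φ S p.1 p.2 j) ∘ Prod.mk t0)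
        from rfl, h3.fderiv]
    simp
  have hsym : ∀ a b, H0 a b = H0 b a := by
    intro a b
    have := hH0.1.apply a b
    simpa using this.symm
  have hDGθ : ∀ (w : Fin k → ℝ) j, DG ((0 : Fin m → ℝ), w) j = (H0 *ᵥ w) j := by
    intro w j
    have hexp : DG ((0 : Fin m → ℝ), w)
        = ∑ l, w l • DG ((0 : Fin m → ℝ), Pi.single l 1) := by
      have h1 : DG ((0 : Fin m → ℝ), w)
          = (DG.comp (((0 : (Fin k → ℝ) →L[ℝ] (Fin m → ℝ))).prod
              (ContinuousLinearMap.id ℝ _))) w := by simp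
      rw [h1, clm_pi_expand]
      simp
    rw [hexp]
    rw [Finset.sum_apply]
    have : ∀ l, (w l • DG ((0 : Fin m → ℝ), Pi.single l 1)) j
        = H0 j l * w l := by
      intro l
      have := (hHentry l j).trans (hθval l j)
      rw [Pi.smul_apply, smul_eq_mul, ← this, hsym j l]
      ring
    rw [Finset.sum_congr rfl fun l _ => this l]
    simp [Matrix.mulVec, dotProduct]
  -- t-direction of DG
  have hDGt : ∀ i j, DG ((Pi.single i 1 : Fin m → ℝ), (0 : Fin k → ℝ)) j
      = -(S θ0 i / t0 i ^ 2 * deriv (deriv φ) (S θ0 i / t0 i))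
        * (fderiv ℝ (fun y => S y i) θ0 (Pi.single j 1)) := by
    intro i j
    have h1 : HasFDerivAt (fun t : Fin m → ℝ => ((t, θ0) : (Fin m → ℝ) × (Fin k → ℝ)))
        ((ContinuousLinearMap.id ℝ _).prod (0 : (Fin m → ℝ) →L[ℝ] (Fin k → ℝ))) t0 :=
      (hasFDerivAt_id t0).prodMk (hasFDerivAt_const θ0 t0)
    have h2 : HasFDerivAt (fun p : (Fin m → ℝ) × (Fin k → ℝ) => gradD φ S p.1 p.2 j)
        ((ContinuousLinearMap.proj j).comp DG) (t0, θ0) :=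
      by have := (hasFDerivAt_apply (𝕜 := ℝ) (F' := fun _ : Fin k => ℝ) j (gradD φ S t0 θ0)).comp (t0, θ0) hDG; exact this
    have h3 := h2.comp t0 h1
    have h4 := lem_gradD_t_hasFDerivAt (S := S) hφC2 (hSpos θ0 hθ0int) ht0pos j
    have h5 := h3.unique h4
    have happ := ContinuousLinearMap.ext_iff.mp h5 (Pi.single i 1)
    simp at happ
    rw [happ, Finset.sum_eq_single i (fun b _ hb => by simp [Pi.single_apply, hb])
      (fun h => absurd (Finset.mem_univ i) h), Pi.single_eq_same]
    field_simp
  -- the map Φ and its invertible derivative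
  set Φ : (Fin m → ℝ) × (Fin k → ℝ) → (Fin m → ℝ) × (Fin k → ℝ) :=
    fun p => (p.1, gradD φ S p.1 p.2) with hΦdef
  have hΦc1 : ContDiffAt ℝ 1 Φ (t0, θ0) := contDiffAt_fst.prodMk hGc1at
  set DΦ : ((Fin m → ℝ) × (Fin k → ℝ)) →L[ℝ] ((Fin m → ℝ) × (Fin k → ℝ)) :=
    (ContinuousLinearMap.fst ℝ _ _).prod DG with hDΦdef
  have hΦ' : HasFDerivAt Φ DΦ (t0, θ0) := (hasFDerivAt_fst).prodMk hDG
  have hinj : Function.Injective DΦ := by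
    have h0 : ∀ u : (Fin m → ℝ) × (Fin k → ℝ), DΦ u = 0 → u = 0 := by
      intro u hu
      have hu1 : u.1 = 0 := congrArg Prod.fst hu
      have hu2 : DG u = 0 := congrArg Prod.snd hu
      have hu2' : DG ((0 : Fin m → ℝ), u.2) = 0 := by
        rw [show ((0 : Fin m → ℝ), u.2) = u by rw [← hu1]]
        exact hu2
      have hmv : H0 *ᵥ u.2 = 0 := by
        funext j
        rw [← hDGθ u.2 j, hu2']
      by_cases h : u.2 = 0
      · exact Prod.ext hu1 h
      · exfalso
        have := hH0.dotProduct_mulVec_pos h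
        rw [hmv] at this
        simp at this
    intro v w hvw
    have := h0 (v - w) (by rw [map_sub, hvw, sub_self])
    exact sub_eq_zero.mp this
  set eDΦ := LinearEquiv.toContinuousLinearEquiv
    (LinearEquiv.ofInjectiveEndo (DΦ : ((Fin m → ℝ) × (Fin k → ℝ)) →ₗ[ℝ] _) hinj)
    with heDΦdef
  have hcoe : (eDΦ : ((Fin m → ℝ) × (Fin k → ℝ)) →L[ℝ] ((Fin m → ℝ) × (Fin k → ℝ))) = DΦ :=
    ContinuousLinearMap.ext fun v => rfl
  have hΦ'' : HasFDerivAt Φ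
      ((eDΦ : ((Fin m → ℝ) × (Fin k → ℝ)) ≃L[ℝ] ((Fin m → ℝ) × (Fin k → ℝ))) :
        ((Fin m → ℝ) × (Fin k → ℝ)) →L[ℝ] ((Fin m → ℝ) × (Fin k → ℝ))) (t0, θ0) := by
    rw [hcoe]; exact hΦ'
  have hstrict := hΦc1.hasStrictFDerivAt' hΦ'' one_ne_zero
  set Ψ := hstrict.localInverse Φ _ (t0, θ0) with hΨdef
  have hΨc1 : ContDiffAt ℝ 1 Ψ (Φ (t0, θ0)) := hΦc1.to_localInverse hΦ'' one_ne_zero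
  have hleft : ∀ᶠ p in 𝓝 ((t0, θ0) : (Fin m → ℝ) × (Fin k → ℝ)), Ψ (Φ p) = p :=
    hstrict.eventually_left_inverse
  have hΦp0 : Φ (t0, θ0) = ((t0, 0) : (Fin m → ℝ) × (Fin k → ℝ)) := by
    have h := hstat t0 ht0N
    simp only [hΦdef]
    rw [← hθ0def] at h
    rw [h]
  -- the implicit function g
  set g : (Fin m → ℝ) → (Fin k → ℝ) := fun t => (Ψ (t, 0)).2 with hgdef
  have hgc1 : ContDiffAt ℝ 1 g t0 := by
    have h1 : ContDiffAt ℝ 1 (fun t : Fin m → ℝ => ((t, 0) : (Fin m → ℝ) × (Fin k → ℝ))) t0 :=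
      contDiffAt_id.prodMk contDiffAt_const
    have h2 : ContDiffAt ℝ 1 Ψ ((t0, 0) : (Fin m → ℝ) × (Fin k → ℝ)) := hΦp0 ▸ hΨc1
    exact contDiffAt_snd.comp t0 (h2.comp t0 h1)
  have hϑeq : ϑ =ᶠ[𝓝 t0] g := by
    have htend2 : Tendsto (fun t => ((t, ϑ t) : (Fin m → ℝ) × (Fin k → ℝ))) (𝓝 t0)
        (𝓝 (t0, θ0)) := tendsto_id.prodMk_nhds htend
    filter_upwards [htend2.eventually hleft, hNopen.mem_nhds ht0N] with t h1 h2
    have hΦt : Φ (t, ϑ t) = (t, 0) := by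
      simp only [hΦdef]
      rw [hstat t h2]
    rw [hΦt] at h1
    rw [hgdef]
    simp only
    rw [h1]
  have hϑc1 : ContDiffAt ℝ 1 ϑ t0 := hgc1.congr_of_eventuallyEq hϑeq
  -- derivative of ϑ
  have hϑdiff : DifferentiableAt ℝ ϑ t0 := hϑc1.differentiableAt one_ne_zero
  set Lϑ := fderiv ℝ ϑ t0 with hLϑdef
  have hLϑ : HasFDerivAt ϑ Lϑ t0 := hϑdiff.hasFDerivAt
  have hchain0 : DG.comp ((ContinuousLinearMap.id ℝ (Fin m → ℝ)).prod Lϑ) = 0 := by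
    have h1 : HasFDerivAt (fun t => gradD φ S t (ϑ t))
        (DG.comp ((ContinuousLinearMap.id ℝ (Fin m → ℝ)).prod Lϑ)) t0 :=
      by have h := (hasFDerivAt_id t0).prodMk hLϑ; exact hDG.comp t0 h
    have h2 : (fun t => gradD φ S t (ϑ t)) =ᶠ[𝓝 t0] (fun _ => (0 : Fin k → ℝ)) := by
      filter_upwards [hNopen.mem_nhds ht0N] with t ht
      exact hstat t ht
    have h3 := h1.congr_of_eventuallyEq h2.symm
    exact h3.unique (hasFDerivAt_const 0 t0)
  have hkey : ∀ v : Fin m → ℝ, DG (v, Lϑ v) = 0 := by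
    intro v
    have := ContinuousLinearMap.ext_iff.mp hchain0 v
    simpa using this
  -- matrices
  have hJϑcol : ∀ (i : Fin m) (l : Fin k), jacMatrix ϑ t0 l i = Lϑ (Pi.single i 1) l := by
    intro i l
    have hl : HasFDerivAt (fun t => ϑ t l) ((ContinuousLinearMap.proj l).comp Lϑ) t0 :=
      (hasFDerivAt_apply (𝕜 := ℝ) (F' := fun _ : Fin k => ℝ) l (ϑ t0)).comp t0 hLϑ
    show fderiv ℝ (fun t => ϑ t l) t0 (Pi.single i 1) = _
    rw [hl.fderiv]
    rfl
  have hHJ : H0 * jacMatrix ϑ t0 = (jacMatrix S θ0)ᵀ * Matrix.diagonal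
      (fun i => S θ0 i / t0 i ^ 2 * deriv (deriv φ) (S θ0 i / t0 i)) := by
    ext j i
    have h0 := hkey (Pi.single i 1)
    have hsplit : DG ((Pi.single i 1 : Fin m → ℝ), Lϑ (Pi.single i 1))
        = DG (Pi.single i 1, 0) + DG (0, Lϑ (Pi.single i 1)) := by
      rw [← map_add]
      congr 1
      simp
    rw [hsplit] at h0
    have h0j := congrFun h0 j
    have h1 : (H0 *ᵥ Lϑ (Pi.single i 1)) j = - DG (Pi.single i 1, (0 : Fin k → ℝ)) j := by
      have := hDGθ (Lϑ (Pi.single i 1)) j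
      have h2 : DG (Pi.single i 1, (0:Fin k → ℝ)) j + DG ((0:Fin m → ℝ), Lϑ (Pi.single i 1)) j
          = 0 := h0j
      linarith [this]
    have hlhs : (H0 * jacMatrix ϑ t0) j i = (H0 *ᵥ Lϑ (Pi.single i 1)) j := by
      simp only [Matrix.mul_apply, Matrix.mulVec, dotProduct]
      exact Finset.sum_congr rfl fun l _ => by rw [hJϑcol i l]
    have hrhs : ((jacMatrix S θ0)ᵀ * Matrix.diagonal
        (fun i => S θ0 i / t0 i ^ 2 * deriv (deriv φ) (S θ0 i / t0 i))) j i
        = (S θ0 i / t0 i ^ 2 * deriv (deriv φ) (S θ0 i / t0 i))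
          * fderiv ℝ (fun y => S y i) θ0 (Pi.single j 1) := by
      rw [Matrix.mul_apply]
      rw [Finset.sum_eq_single i (fun b _ hb => by
        rw [Matrix.diagonal_apply_ne _ hb, mul_zero]) (fun h => absurd (Finset.mem_univ i) h)]
      simp [Matrix.transpose_apply, jacMatrix, mul_comm]
    rw [hlhs, h1, hDGt i j, hrhs]
    ring
  have hdet : IsUnit H0.det := isUnit_iff_ne_zero.mpr (ne_of_gt hH0.det_pos)
  have hJϑeq : jacMatrix ϑ t0 = H0⁻¹ * (jacMatrix S θ0)ᵀ * Matrix.diagonal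
      (fun i => S θ0 i / t0 i ^ 2 * deriv (deriv φ) (S θ0 i / t0 i)) := by
    rw [Matrix.mul_assoc, ← hHJ, ← Matrix.mul_assoc, Matrix.nonsing_inv_mul _ hdet,
      Matrix.one_mul]
  have hfinal : jacMatrix (fun t => S (ϑ t)) t0 = jacMatrix S θ0 * jacMatrix ϑ t0 := by
    ext i jj
    have hSi : ContDiffOn ℝ 2 (fun y => S y i) (interior Θ) :=
      ((ContinuousLinearMap.proj i : (Fin m → ℝ) →L[ℝ] ℝ).contDiff.comp_contDiffOn hSC2)
    have hSder : HasFDerivAt (fun y => S y i) (fderiv ℝ (fun y => S y i) θ0) θ0 :=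
      ((hSi.contDiffAt (isOpen_interior.mem_nhds hθ0int)).differentiableAt
        (by norm_num)).hasFDerivAt
    have hch : HasFDerivAt (fun t => S (ϑ t) i)
        ((fderiv ℝ (fun y => S y i) θ0).comp Lϑ) t0 := hSder.comp t0 hLϑ
    show fderiv ℝ (fun t => S (ϑ t) i) t0 (Pi.single jj 1) = _
    rw [hch.fderiv, ContinuousLinearMap.comp_apply,
      clm_pi_expand (fderiv ℝ (fun y => S y i) θ0) (Lϑ (Pi.single jj 1)),
      Matrix.mul_apply]
    refine Finset.sum_congr rfl fun l _ => ?_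
    rw [← hJϑcol jj l]
    simp only [jacMatrix, Matrix.of_apply, smul_eq_mul]
    ring
  -- conclusion
  have hSc1at : ContDiffAt ℝ 1 S θ0 :=
    (hSC2.contDiffAt (isOpen_interior.mem_nhds hθ0int)).of_le one_le_two
  have hcomp1 : ContDiffAt ℝ 1 (fun t => S (ϑ t)) t0 := hSc1at.comp t0 hϑc1
  obtain ⟨u, hu_nhds, hu⟩ := hcomp1.contDiffOn le_rfl (by norm_num)
  refine ⟨interior u ∩ N, isOpen_interior.inter hNopen,
    ⟨mem_interior_iff_mem_nhds.mpr hu_nhds, ht0N⟩, Set.inter_subset_right,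
    hu.mono (Set.inter_subset_left.trans interior_subset), ?_⟩
  rw [hfinal, hJϑeq]
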